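/- Suppose Supp(f₊) ⊂ [γ, 1] and Supp(f₋) ⊂ [−1, −γ] for some γ ∈ (0,1), where f± are probability densities, and define g±^σ(x) = λ± (f± * K_σ)(x) for constants λ± > 0 and the Gaussian kernel K_σ. Then for every x < −1, g₊^σ(x)/(g₊^σ(x) + g₋^σ(x)) ≤ (λ₊/λ₋) e^{−2γ|x|/σ²}. -/

import Mathlib

open MeasureTheory

/-- The Gaussian kernel `K_σ`. -/
noncomputable def K (σ : ℝ) (x : ℝ) : ℝ :=
  Real.exp (-x^2 / (2 * σ^2)) / Real.sqrt (2 * Real.pi * σ^2)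

lemma K_pos (σ : ℝ) (hσ : 0 < σ) (y : ℝ) : 0 < K σ y :=
  div_pos (Real.exp_pos _) (Real.sqrt_pos.2 (by positivity))

lemma K_le (σ : ℝ) (hσ : 0 < σ) {y z : ℝ} (h1 : y ≤ z) (h2 : z ≤ 0) : K σ y ≤ K σ z := by
  unfold K
  have hs : 0 < Real.sqrt (2 * Real.pi * σ^2) := Real.sqrt_pos.2 (by positivity)
  refine (div_le_div_iff_of_pos_right hs).2 (Real.exp_le_exp.2 ((div_le_div_iff_of_pos_right (by positivity : (0:ℝ) < 2*σ^2)).2 (by nlinarith)))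

lemma K_cont (σ x : ℝ) : Continuous (fun s => K σ (x - s)) := by
  unfold K; fun_prop

lemma K_bdd (σ : ℝ) (hσ : 0 < σ) (y : ℝ) :
    ‖K σ y‖ ≤ (Real.sqrt (2 * Real.pi * σ^2))⁻¹ := by
  have hs : 0 < Real.sqrt (2 * Real.pi * σ^2) := Real.sqrt_pos.2 (by positivity)
  rw [Real.norm_eq_abs, abs_of_pos (K_pos σ hσ y)]
  unfold K
  rw [div_le_iff₀ hs, inv_mul_cancel₀ hs.ne']
  exact Real.exp_le_one_iff.2
    (div_nonpos_iff.mpr (Or.inr ⟨neg_nonpos.2 (sq_nonneg y), by positivity⟩))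

/-- When the supports of `f₊` and `f₋` are separated by a margin `γ`, the
ratio `g₊/(g₊+g₋)` decays exponentially for `x < −1`. -/
theorem ratio_bound_separated (γ : ℝ) (hγ : γ ∈ Set.Ioo (0:ℝ) 1)
    (σ lamp lamm : ℝ) (hσ : 0 < σ) (hlp : 0 < lamp) (hlm : 0 < lamm)
    (fp fm : ℝ → ℝ)
    (hfp0 : ∀ s, 0 ≤ fp s) (hfm0 : ∀ s, 0 ≤ fm s)
    (hfpI : Integrable fp) (hfmI : Integrable fm)
    (hfpint : ∫ s, fp s = 1) (hfmint : ∫ s, fm s = 1)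
    (hfpsupp : ∀ s, s ∉ Set.Icc γ 1 → fp s = 0)
    (hfmsupp : ∀ s, s ∉ Set.Icc (-1) (-γ) → fm s = 0)
    (gp gm : ℝ → ℝ)
    (hgp : ∀ x, gp x = lamp * ∫ s, fp s * K σ (x - s))
    (hgm : ∀ x, gm x = lamm * ∫ s, fm s * K σ (x - s)) :
    ∀ x < (-1 : ℝ), gp x / (gp x + gm x) ≤ (lamp / lamm) * Real.exp (-2 * γ * |x| / σ^2) := by
  obtain ⟨hγ0, hγ1⟩ := hγ
  intro x hx
  set A := K σ (x - γ) with hA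
  set B := K σ (x + γ) with hB
  have hApos : 0 < A := K_pos σ hσ _
  have hBpos : 0 < B := K_pos σ hσ _
  have hmeas : AEStronglyMeasurable (fun s => K σ (x - s)) volume :=
    (K_cont σ x).aestronglyMeasurable
  have hbd : ∃ C, ∀ s, ‖K σ (x - s)‖ ≤ C :=
    ⟨(Real.sqrt (2 * Real.pi * σ^2))⁻¹, fun s => K_bdd σ hσ _⟩
  have hIp : Integrable (fun s => fp s * K σ (x - s)) := by
    have := hfpI.bdd_mul hmeas (Filter.Eventually.of_forall fun s => K_bdd σ hσ _)
    simpa [mul_comm] using this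
  have hIm : Integrable (fun s => fm s * K σ (x - s)) := by
    have := hfmI.bdd_mul hmeas (Filter.Eventually.of_forall fun s => K_bdd σ hσ _)
    simpa [mul_comm] using this
  -- upper bound on gp
  have hgpA : gp x ≤ lamp * A := by
    rw [hgp]
    have h1 : ∫ s, fp s * K σ (x - s) ≤ ∫ s, fp s * A := by
      refine integral_mono hIp (hfpI.mul_const A) (fun s => ?_)
      by_cases h : s ∈ Set.Icc γ 1
      · exact mul_le_mul_of_nonneg_left
          (K_le σ hσ (by linarith [h.1] : x - s ≤ x - γ) (by linarith)) (hfp0 s)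
      · simp [hfpsupp s h]
    have h2 : ∫ s, fp s * A = A := by
      rw [integral_mul_const, hfpint, one_mul]
    nlinarith
  -- lower bound on gm
  have hgmB : lamm * B ≤ gm x := by
    rw [hgm]
    have h1 : ∫ s, fm s * B ≤ ∫ s, fm s * K σ (x - s) := by
      refine integral_mono (hfmI.mul_const B) hIm (fun s => ?_)
      by_cases h : s ∈ Set.Icc (-1 : ℝ) (-γ)
      · exact mul_le_mul_of_nonneg_left
          (K_le σ hσ (by linarith [h.2] : x + γ ≤ x - s) (by linarith [h.1])) (hfm0 s)
      · simp [hfmsupp s h]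
    have h2 : ∫ s, fm s * B = B := by
      rw [integral_mul_const, hfmint, one_mul]
    nlinarith
  have hgp0 : 0 ≤ gp x := by
    rw [hgp]
    exact mul_nonneg hlp.le
      (integral_nonneg fun s => mul_nonneg (hfp0 s) (K_pos σ hσ _).le)
  have hgm0 : 0 < gm x := lt_of_lt_of_le (by positivity) hgmB
  have step1 : gp x / (gp x + gm x) ≤ gp x / gm x := by
    apply div_le_div_of_nonneg_left hgp0 hgm0 -- maybe wrong arg order
    linarith
  have step2 : gp x / gm x ≤ (lamp * A) / (lamm * B) :=
    div_le_div₀ (by positivity) hgpA (by positivity) hgmB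
  have hAB : A = B * Real.exp (-2 * γ * |x| / σ^2) := by
    rw [abs_of_neg (by linarith : x < 0)]
    rw [hA, hB]
    unfold K
    rw [div_mul_eq_mul_div, ← Real.exp_add]
    congr 1
    field_simp
    ring
  have heq : (lamp * A) / (lamm * B) = (lamp / lamm) * Real.exp (-2 * γ * |x| / σ^2) := by
    rw [hAB]
    field_simp
  calc gp x / (gp x + gm x) ≤ gp x / gm x := step1
    _ ≤ (lamp * A) / (lamm * B) := step2
    _ = _ := heq
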